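/- Let F be a monic polynomial and χ a non-trivial Dirichlet character modulo F on F_q[T]. Assuming the bound Σ_{deg P = k} χ(P) ≪ (q^{k/2}/k)·deg F for the character sum over monic irreducibles of degree k, we have for any positive integer M and any complex s with Re(s) = 1: ln L(s,χ) = -Σ_{deg P ≤ M} ln(1 - χ(P)/|P|^s) + O((q^{-M/2}/M)·deg F). -/

import Mathlib

open Polynomial Filter

private lemma finite_natDegree_le' (Fq : Type) [Field Fq] [Fintype Fq] (n : ℕ) :
    {p : Polynomial Fq | p.natDegree ≤ n}.Finite := by
  rw [← Set.finite_coe_iff]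
  have hinj : Function.Injective
      (fun p : {p : Polynomial Fq | p.natDegree ≤ n} =>
        fun i : Fin (n + 1) => (p : Polynomial Fq).coeff i) := by
    rintro ⟨p, hp⟩ ⟨r, hr⟩ h
    ext1
    apply Polynomial.ext
    intro i
    rcases le_or_gt i n with hi | hi
    · exact congrFun h ⟨i, Nat.lt_succ_of_le hi⟩
    · rw [Polynomial.coeff_eq_zero_of_natDegree_lt (lt_of_le_of_lt hp hi),
        Polynomial.coeff_eq_zero_of_natDegree_lt (lt_of_le_of_lt hr hi)]
  exact Finite.of_injective _ hinj

private lemma nat_sq_le_four_two_pow' : ∀ k : ℕ, k ^ 2 ≤ 4 * 2 ^ k := by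
  intro k
  induction k with
  | zero => norm_num
  | succ n ih =>
    have h1 : n < 2 ^ n := Nat.lt_two_pow_self
    have h2 : 1 ≤ 2 ^ n := Nat.one_le_two_pow
    rw [pow_succ 2 n]
    nlinarith

private lemma chi_norm_le' (Fq : Type) [Field Fq] [Fintype Fq]
    (F : Polynomial Fq) (hF : F.Monic) (hdeg : 0 < F.natDegree)
    (χ : Polynomial Fq → ℂ)
    (hper : ∀ a b : Polynomial Fq, χ (a + b * F) = χ a)
    (hmul : ∀ a b : Polynomial Fq, χ (a * b) = χ a * χ b)
    (hunit : ∀ a : Polynomial Fq, χ a ≠ 0 ↔ IsCoprime a F)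
    (a : Polynomial Fq) : ‖χ a‖ ≤ 1 := by
  by_cases h0 : χ a = 0
  · simp [h0]
  have hcop : IsCoprime a F := (hunit a).mp h0
  have h1ne : χ 1 ≠ 0 := (hunit 1).mpr isCoprime_one_left
  have hone : χ 1 = 1 := by
    have h := hmul 1 1
    rw [one_mul] at h
    exact (mul_right_cancel₀ h1ne (by rw [← h, one_mul])).symm
  have hpow : ∀ n : ℕ, χ (a ^ n) = χ a ^ n := by
    intro n
    induction n with
    | zero => simpa using hone
    | succ n ih => rw [pow_succ, pow_succ, hmul, ih]
  have key : ∀ m n : ℕ, n < m → a ^ n %ₘ F = a ^ m %ₘ F → ‖χ a‖ ≤ 1 := by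
    intro m n hlt heq
    have hdvd : F ∣ a ^ m - a ^ n := by
      have hm := Polynomial.modByMonic_add_div (a ^ m) F
      have hn := Polynomial.modByMonic_add_div (a ^ n) F
      refine ⟨a ^ m /ₘ F - a ^ n /ₘ F, ?_⟩
      linear_combination hn - hm - heq
    have hfac : a ^ m - a ^ n = a ^ n * (a ^ (m - n) - 1) := by
      have hmn : n + (m - n) = m := by omega
      rw [mul_sub, mul_one, ← pow_add, hmn]
    have hdvd2 : F ∣ a ^ (m - n) - 1 := by
      refine (hcop.symm.pow_right (n := n)).dvd_of_dvd_mul_left ?_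
      rwa [← hfac]
    obtain ⟨c, hc⟩ := hdvd2
    have hval : χ (a ^ (m - n)) = 1 := by
      have : a ^ (m - n) = 1 + c * F := by linear_combination hc
      rw [this, hper 1 c, hone]
    have hN : 0 < m - n := by omega
    have hnorm : ‖χ a‖ ^ (m - n) = 1 := by
      rw [← norm_pow, ← hpow, hval, norm_one]
    by_contra hgt
    push_neg at hgt
    have h2 := one_lt_pow₀ hgt hN.ne'
    rw [hnorm] at h2
    exact lt_irrefl 1 h2
  have hmem : ∀ k : ℕ, (a ^ k %ₘ F).natDegree ≤ F.natDegree := fun k =>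
    Polynomial.natDegree_le_natDegree (Polynomial.degree_modByMonic_lt _ hF).le
  haveI : Finite {p : Polynomial Fq | p.natDegree ≤ F.natDegree} :=
    (finite_natDegree_le' Fq _).to_subtype
  obtain ⟨m, n, hne, heq⟩ := Finite.exists_ne_map_eq_of_infinite
    (fun k : ℕ => (⟨a ^ k %ₘ F, hmem k⟩ : {p : Polynomial Fq | p.natDegree ≤ F.natDegree}))
  have heq' : a ^ m %ₘ F = a ^ n %ₘ F := congrArg Subtype.val heq
  rcases hne.lt_or_gt with h | h
  · exact key n m h heq'
  · exact key m n h heq'.symm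


set_option maxHeartbeats 2000000 in
theorem log_L_truncation (Fq : Type) [Field Fq] [Fintype Fq]
    (q : ℕ) (hq : Fintype.card Fq = q)
    (F : Polynomial Fq) (hF : F.Monic) (hdeg : 0 < F.natDegree)
    (χ : Polynomial Fq → ℂ)
    (hper : ∀ a b : Polynomial Fq, χ (a + b * F) = χ a)
    (hmul : ∀ a b : Polynomial Fq, χ (a * b) = χ a * χ b)
    (hunit : ∀ a : Polynomial Fq, χ a ≠ 0 ↔ IsCoprime a F)
    (hnontriv : ∃ a : Polynomial Fq, IsCoprime a F ∧ χ a ≠ 1)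
    (C' : ℝ)
    (hbound : ∀ k : ℕ, 0 < k →
      ‖∑ᶠ P ∈ {P : Polynomial Fq | P.Monic ∧ Irreducible P ∧ P.natDegree = k}, χ P‖
        ≤ C' * (q : ℝ) ^ ((k : ℝ) / 2) / k * F.natDegree) :
    ∃ C : ℝ, 0 < C ∧ ∀ s : ℂ, s.re = 1 →
      ∃ lnL : ℂ,
        Tendsto (fun M : ℕ =>
            -∑ᶠ P ∈ {P : Polynomial Fq | P.Monic ∧ Irreducible P ∧ P.natDegree ≤ M},
              Complex.log (1 - χ P / ((q : ℂ) ^ P.natDegree) ^ s))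
          atTop (nhds lnL) ∧
        ∀ M : ℕ, 1 ≤ M →
          ‖lnL - (-∑ᶠ P ∈ {P : Polynomial Fq | P.Monic ∧ Irreducible P ∧ P.natDegree ≤ M},
              Complex.log (1 - χ P / ((q : ℂ) ^ P.natDegree) ^ s))‖
            ≤ C * ((q : ℝ) ^ (-(M : ℝ) / 2) / M) * F.natDegree := by
  classical
  have hq2 : 2 ≤ q := by
    have h := Fintype.one_lt_card (α := Fq)
    omega
  have hqR : (2 : ℝ) ≤ (q : ℝ) := by exact_mod_cast hq2
  have hq0 : (0 : ℝ) < q := by linarith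
  have hdR : (1 : ℝ) ≤ (F.natDegree : ℝ) := by exact_mod_cast hdeg
  have hχ : ∀ a, ‖χ a‖ ≤ 1 := chi_norm_le' Fq F hF hdeg χ hper hmul hunit
  -- C' is nonnegative
  have hC'0 : 0 ≤ C' := by
    have h := (norm_nonneg _).trans (hbound 1 one_pos)
    have hp : (0 : ℝ) < (q : ℝ) ^ ((1 : ℝ) / 2) := Real.rpow_pos_of_pos hq0 _
    push_cast at h
    rw [div_one] at h
    by_contra hneg
    push_neg at hneg
    have hd0 : (0 : ℝ) < F.natDegree := by linarith
    have h2 := mul_neg_of_neg_of_pos hneg (mul_pos hp hd0)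
    rw [← mul_assoc] at h2
    linarith
  -- finiteness of the index sets
  have hfinle : ∀ M : ℕ,
      {P : Polynomial Fq | P.Monic ∧ Irreducible P ∧ P.natDegree ≤ M}.Finite := fun M =>
    (finite_natDegree_le' Fq M).subset fun P hP => hP.2.2
  have hfineq : ∀ k : ℕ,
      {P : Polynomial Fq | P.Monic ∧ Irreducible P ∧ P.natDegree = k}.Finite := fun k =>
    (finite_natDegree_le' Fq k).subset fun P hP => le_of_eq hP.2.2
  -- cardinality bound
  have hcard : ∀ k : ℕ, (hfineq k).toFinset.card ≤ q ^ k := by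
    intro k
    have h := Finset.card_le_card_of_injOn
      (f := fun (P : Polynomial Fq) (i : Fin k) => P.coeff (i : ℕ))
      (s := (hfineq k).toFinset) (t := (Finset.univ : Finset (Fin k → Fq)))
      (fun P _ => Finset.mem_univ _) ?_
    · calc (hfineq k).toFinset.card ≤ (Finset.univ : Finset (Fin k → Fq)).card := h
        _ = q ^ k := by
          rw [Finset.card_univ, ← hq]
          simp
    · intro P₁ hP₁ P₂ hP₂ hco
      rw [Set.Finite.coe_toFinset] at hP₁ hP₂
      apply Polynomial.ext
      intro i
      rcases lt_trichotomy i k with hi | hi | hi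
      · exact congrFun hco ⟨i, hi⟩
      · subst hi
        rw [← hP₁.2.2, hP₁.1.coeff_natDegree, hP₁.2.2, ← hP₂.2.2, hP₂.1.coeff_natDegree]
      · rw [Polynomial.coeff_eq_zero_of_natDegree_lt (hP₁.2.2 ▸ hi),
          Polynomial.coeff_eq_zero_of_natDegree_lt (hP₂.2.2 ▸ hi)]
  -- numeric lemma : k ≤ 2 q^{k/2}
  have hk2Q : ∀ k : ℕ, (k : ℝ) ≤ 2 * (q : ℝ) ^ ((k : ℝ) / 2) := by
    intro k
    have h1 : ((k : ℝ)) ^ 2 ≤ 4 * (2 : ℝ) ^ (k : ℕ) := by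
      exact_mod_cast nat_sq_le_four_two_pow' k
    have h2 : (2 : ℝ) ^ (k : ℕ) ≤ (q : ℝ) ^ (k : ℕ) := pow_le_pow_left₀ (by norm_num) hqR k
    have h3 : ((q : ℝ) ^ ((k : ℝ) / 2)) ^ 2 = (q : ℝ) ^ (k : ℕ) := by
      rw [sq, ← Real.rpow_add hq0, ← Real.rpow_natCast (q : ℝ) k]
      congr 1
      ring
    have hQ0 : (0 : ℝ) < (q : ℝ) ^ ((k : ℝ) / 2) := Real.rpow_pos_of_pos hq0 _
    nlinarith [Nat.cast_nonneg (α := ℝ) k]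
  -- geometric ratio
  set r : ℝ := (q : ℝ) ^ (-(1 : ℝ) / 2) with hr_def
  have hr0 : 0 < r := Real.rpow_pos_of_pos hq0 _
  have hrk : ∀ k : ℕ, r ^ k = (q : ℝ) ^ (-(k : ℝ) / 2) := by
    intro k
    rw [hr_def, ← Real.rpow_natCast ((q : ℝ) ^ (-(1 : ℝ) / 2)) k, ← Real.rpow_mul hq0.le]
    congr 1
    ring
  have hr34 : r ≤ 3 / 4 := by
    have hs2 : (4 / 3 : ℝ) ≤ (q : ℝ) ^ ((1 : ℝ) / 2) := by
      rw [show ((1 : ℝ) / 2) = (1 / (2 : ℝ)) by norm_num, ← Real.sqrt_eq_rpow]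
      rw [show (4 / 3 : ℝ) = Real.sqrt ((4 / 3) ^ 2) by
        rw [Real.sqrt_sq (by norm_num)]]
      exact Real.sqrt_le_sqrt (by nlinarith)
    have hrinv : r = ((q : ℝ) ^ ((1 : ℝ) / 2))⁻¹ := by
      rw [hr_def, ← Real.rpow_neg hq0.le]
      congr 1
      ring
    rw [hrinv]
    rw [inv_le_comm₀ (by positivity) (by norm_num)]
    linarith
  have hr1 : r < 1 := lt_of_le_of_lt hr34 (by norm_num)
  refine ⟨4 * (C' + 2), by linarith, ?_⟩
  intro s hs
  set f : Polynomial Fq → ℂ :=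
    fun P => Complex.log (1 - χ P / ((q : ℂ) ^ P.natDegree) ^ s) with hf_def
  set g : ℕ → ℂ := fun k => ∑ P ∈ (hfineq k).toFinset, f P with hg_def
  -- norm of the denominator
  have hden : ∀ k : ℕ, ‖((q : ℂ) ^ k) ^ s‖ = (q : ℝ) ^ k := by
    intro k
    have hx : (0 : ℝ) < (q : ℝ) ^ k := pow_pos hq0 k
    rw [show ((q : ℂ) ^ k) = ((((q : ℝ) ^ k : ℝ)) : ℂ) by push_cast; ring]
    rw [Complex.norm_cpow_eq_rpow_re_of_pos hx, hs, Real.rpow_one]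
  -- norm of each z is small
  have hz : ∀ P : Polynomial Fq, ‖χ P / ((q : ℂ) ^ P.natDegree) ^ s‖
      ≤ ((q : ℝ) ^ P.natDegree)⁻¹ := by
    intro P
    rw [norm_div, hden P.natDegree]
    have hx : (0 : ℝ) < (q : ℝ) ^ P.natDegree := pow_pos hq0 _
    rw [div_eq_mul_inv]
    have := hχ P
    nlinarith [inv_pos.mpr hx]
  -- per-degree bound
  have hg1 : ∀ k : ℕ, 1 ≤ k →
      ‖g k‖ ≤ (C' + 2) * ((q : ℝ) ^ (-(k : ℝ) / 2) / k) * F.natDegree := by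
    intro k hk
    have hk0 : (0 : ℝ) < k := by exact_mod_cast hk
    have hqk : (0 : ℝ) < (q : ℝ) ^ k := pow_pos hq0 k
    have hqk2 : (2 : ℝ) ≤ (q : ℝ) ^ k := by
      calc (2 : ℝ) = 2 ^ 1 := by norm_num
        _ ≤ 2 ^ k := pow_le_pow_right₀ one_le_two hk
        _ ≤ (q : ℝ) ^ k := pow_le_pow_left₀ (by norm_num) hqR k
    have hsplit : g k = (∑ P ∈ (hfineq k).toFinset,
        (f P + χ P / ((q : ℂ) ^ P.natDegree) ^ s))
        - ∑ P ∈ (hfineq k).toFinset, χ P / ((q : ℂ) ^ P.natDegree) ^ s := by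
      rw [← Finset.sum_sub_distrib]
      exact Finset.sum_congr rfl fun P _ => by ring
    -- Part A : the error terms
    have hA : ‖∑ P ∈ (hfineq k).toFinset, (f P + χ P / ((q : ℂ) ^ P.natDegree) ^ s)‖
        ≤ (q : ℝ) ^ k * (((q : ℝ) ^ k)⁻¹ * ((q : ℝ) ^ k)⁻¹) := by
      calc ‖∑ P ∈ (hfineq k).toFinset, (f P + χ P / ((q : ℂ) ^ P.natDegree) ^ s)‖
          ≤ ∑ P ∈ (hfineq k).toFinset, ‖f P + χ P / ((q : ℂ) ^ P.natDegree) ^ s‖ :=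
            norm_sum_le _ _
        _ ≤ ∑ _P ∈ (hfineq k).toFinset, ((q : ℝ) ^ k)⁻¹ * ((q : ℝ) ^ k)⁻¹ := by
            apply Finset.sum_le_sum
            intro P hP
            rw [Set.Finite.mem_toFinset] at hP
            have hPk : P.natDegree = k := hP.2.2
            simp only [hf_def]
            rw [hPk]
            set w : ℂ := χ P / ((q : ℂ) ^ k) ^ s with hw_def
            have hz1 : ‖w‖ ≤ ((q : ℝ) ^ k)⁻¹ := by
              have h := hz P
              rw [hPk] at h
              exact h
            have hhalf : ((q : ℝ) ^ k)⁻¹ ≤ 1 / 2 := by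
              rw [inv_le_comm₀ hqk (by norm_num)]
              linarith
            have hlt1 : ‖-w‖ < 1 := by rw [norm_neg]; linarith [norm_nonneg w]
            have hlog := Complex.norm_log_one_add_sub_self_le hlt1
            rw [← sub_eq_add_neg, sub_neg_eq_add, norm_neg] at hlog
            refine hlog.trans ?_
            have hi2 : (1 - ‖w‖)⁻¹ ≤ 2 := by
              rw [inv_le_comm₀ (by linarith [norm_nonneg w]) (by norm_num)]
              linarith
            have hn0 : (0 : ℝ) ≤ ‖w‖ := norm_nonneg w
            have hsq : ‖w‖ ^ 2 ≤ ((q : ℝ) ^ k)⁻¹ * ((q : ℝ) ^ k)⁻¹ := by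
              rw [sq]
              exact mul_le_mul hz1 hz1 hn0 (by positivity)
            nlinarith [sq_nonneg ‖w‖]
        _ = ((hfineq k).toFinset.card : ℝ) * (((q : ℝ) ^ k)⁻¹ * ((q : ℝ) ^ k)⁻¹) := by
            rw [Finset.sum_const, nsmul_eq_mul]
        _ ≤ (q : ℝ) ^ k * (((q : ℝ) ^ k)⁻¹ * ((q : ℝ) ^ k)⁻¹) := by
            have hc : ((hfineq k).toFinset.card : ℝ) ≤ (q : ℝ) ^ k := by
              have := hcard k
              push_cast
              exact_mod_cast this
            exact mul_le_mul_of_nonneg_right hc (by positivity)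
    -- Part B : the main terms
    have hBsum : ∑ P ∈ (hfineq k).toFinset, χ P / ((q : ℂ) ^ P.natDegree) ^ s
        = (∑ P ∈ (hfineq k).toFinset, χ P) / ((q : ℂ) ^ k) ^ s := by
      rw [Finset.sum_div]
      refine Finset.sum_congr rfl fun P hP => ?_
      rw [Set.Finite.mem_toFinset] at hP
      rw [hP.2.2]
    have hBnorm : ‖∑ P ∈ (hfineq k).toFinset, χ P‖
        ≤ C' * (q : ℝ) ^ ((k : ℝ) / 2) / k * F.natDegree := by
      have hb := hbound k hk
      rwa [finsum_mem_eq_finite_toFinset_sum _ (hfineq k)] at hb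
    have hB : ‖∑ P ∈ (hfineq k).toFinset, χ P / ((q : ℂ) ^ P.natDegree) ^ s‖
        ≤ C' * ((q : ℝ) ^ (-(k : ℝ) / 2) / k) * F.natDegree := by
      rw [hBsum, norm_div, hden k]
      have hstep : ‖∑ P ∈ (hfineq k).toFinset, χ P‖ / (q : ℝ) ^ k
          ≤ (C' * (q : ℝ) ^ ((k : ℝ) / 2) / k * F.natDegree) / (q : ℝ) ^ k := by
        gcongr
      refine hstep.trans (le_of_eq ?_)
      rw [← Real.rpow_natCast (q : ℝ) k,
        show -(k : ℝ) / 2 = (k : ℝ) / 2 - (k : ℝ) by ring, Real.rpow_sub hq0]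
      ring
    -- combine
    rw [hsplit]
    have hcomb := (norm_sub_le _ _).trans (add_le_add hA hB)
    refine hcomb.trans ?_
    have hqq : (q : ℝ) ^ k * (((q : ℝ) ^ k)⁻¹ * ((q : ℝ) ^ k)⁻¹) = ((q : ℝ) ^ k)⁻¹ := by
      field_simp
    rw [hqq]
    have hQ0 : (0 : ℝ) < (q : ℝ) ^ ((k : ℝ) / 2) := Real.rpow_pos_of_pos hq0 _
    have hinveq : ((q : ℝ) ^ k)⁻¹ = ((q : ℝ) ^ ((k : ℝ) / 2))⁻¹ * ((q : ℝ) ^ ((k : ℝ) / 2))⁻¹ := by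
      rw [← mul_inv, ← Real.rpow_add hq0, ← Real.rpow_natCast (q : ℝ) k]
      congr 2
      ring
    have hxeq : (q : ℝ) ^ (-(k : ℝ) / 2) = ((q : ℝ) ^ ((k : ℝ) / 2))⁻¹ := by
      rw [← Real.rpow_neg hq0.le]
      congr 1
      ring
    have haQ : ((q : ℝ) ^ ((k : ℝ) / 2))⁻¹ * k ≤ 2 := by
      rw [inv_mul_le_iff₀ hQ0]
      linarith [hk2Q k]
    have hmain : ((q : ℝ) ^ k)⁻¹ ≤ 2 * ((q : ℝ) ^ (-(k : ℝ) / 2) / k) := by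
      rw [hinveq, hxeq]
      have ha0 : (0 : ℝ) < ((q : ℝ) ^ ((k : ℝ) / 2))⁻¹ := inv_pos.mpr hQ0
      have hkne : (k : ℝ) ≠ 0 := hk0.ne'
      rw [← sub_nonneg]
      have hfact : 2 * (((q : ℝ) ^ ((k : ℝ) / 2))⁻¹ / k)
          - ((q : ℝ) ^ ((k : ℝ) / 2))⁻¹ * ((q : ℝ) ^ ((k : ℝ) / 2))⁻¹
          = (((q : ℝ) ^ ((k : ℝ) / 2))⁻¹ / k) *
            (2 - ((q : ℝ) ^ ((k : ℝ) / 2))⁻¹ * k) := by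
        field_simp
      rw [hfact]
      exact mul_nonneg (by positivity) (by linarith)
    have hx0 : (0 : ℝ) < (q : ℝ) ^ (-(k : ℝ) / 2) := Real.rpow_pos_of_pos hq0 _
    have hfin : ((q : ℝ) ^ k)⁻¹ ≤ 2 * ((q : ℝ) ^ (-(k : ℝ) / 2) / k) * F.natDegree := by
      have h2 : (0 : ℝ) ≤ 2 * ((q : ℝ) ^ (-(k : ℝ) / 2) / k) := by positivity
      calc ((q : ℝ) ^ k)⁻¹ ≤ 2 * ((q : ℝ) ^ (-(k : ℝ) / 2) / k) := hmain
        _ = 2 * ((q : ℝ) ^ (-(k : ℝ) / 2) / k) * 1 := by ring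
        _ ≤ 2 * ((q : ℝ) ^ (-(k : ℝ) / 2) / k) * F.natDegree := by
            exact mul_le_mul_of_nonneg_left hdR h2
    linarith
  have hg0 : g 0 = 0 := by
    apply Finset.sum_eq_zero
    intro P hP
    rw [Set.Finite.mem_toFinset] at hP
    exact absurd hP.2.2 hP.2.1.natDegree_pos.ne'
  -- summability
  have hCd0 : (0 : ℝ) ≤ (C' + 2) * F.natDegree := by nlinarith
  have hnormle : ∀ k : ℕ, ‖g k‖ ≤ ((C' + 2) * F.natDegree) * r ^ k := by
    intro k
    rcases Nat.eq_zero_or_pos k with rfl | hk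
    · rw [hg0, norm_zero, pow_zero, mul_one]
      exact hCd0
    · refine (hg1 k hk).trans ?_
      rw [hrk k]
      have hx0 : (0 : ℝ) < (q : ℝ) ^ (-(k : ℝ) / 2) := Real.rpow_pos_of_pos hq0 _
      have hkR : (1 : ℝ) ≤ k := by exact_mod_cast hk
      have hdd : (q : ℝ) ^ (-(k : ℝ) / 2) / k ≤ (q : ℝ) ^ (-(k : ℝ) / 2) :=
        div_le_self hx0.le hkR
      calc (C' + 2) * ((q : ℝ) ^ (-(k : ℝ) / 2) / k) * F.natDegree
          = ((C' + 2) * F.natDegree) * ((q : ℝ) ^ (-(k : ℝ) / 2) / k) := by ring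
        _ ≤ ((C' + 2) * F.natDegree) * (q : ℝ) ^ (-(k : ℝ) / 2) :=
            mul_le_mul_of_nonneg_left hdd hCd0
  have hgeo : Summable (fun k : ℕ => ((C' + 2) * F.natDegree) * r ^ k) :=
    (summable_geometric_of_lt_one hr0.le hr1).mul_left _
  have hsumnorm : Summable fun k => ‖g k‖ :=
    Summable.of_nonneg_of_le (fun _ => norm_nonneg _) hnormle hgeo
  have hsum : Summable g := hsumnorm.of_norm
  -- partial-sum identity
  have hpart : ∀ M : ℕ,
      ∑ᶠ P ∈ {P : Polynomial Fq | P.Monic ∧ Irreducible P ∧ P.natDegree ≤ M}, f P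
        = ∑ k ∈ Finset.range (M + 1), g k := by
    intro M
    rw [finsum_mem_eq_finite_toFinset_sum _ (hfinle M)]
    rw [← Finset.sum_fiberwise_of_maps_to (g := fun P : Polynomial Fq => P.natDegree)
      (t := Finset.range (M + 1)) (fun P hP => Finset.mem_range.mpr
        (Nat.lt_succ_of_le (((hfinle M).mem_toFinset.mp hP).2.2))) f]
    refine Finset.sum_congr rfl fun k hk => ?_
    rw [Finset.mem_range] at hk
    have hfe : (hfinle M).toFinset.filter (fun P => P.natDegree = k)
        = (hfineq k).toFinset := by
      ext P
      simp only [Finset.mem_filter, Set.Finite.mem_toFinset, Set.mem_setOf_eq]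
      constructor
      · rintro ⟨⟨h1, h2, _⟩, h4⟩
        exact ⟨h1, h2, h4⟩
      · rintro ⟨h1, h2, h3⟩
        exact ⟨⟨h1, h2, h3 ▸ Nat.lt_succ_iff.mp hk⟩, h3⟩
    rw [hfe]
  refine ⟨-∑' k, g k, ?_, ?_⟩
  · -- convergence
    have h0 := hsum.hasSum.tendsto_sum_nat
    have h1 := (h0.comp (tendsto_add_atTop_nat 1)).neg
    refine h1.congr fun M => ?_
    simp only [Function.comp_def]
    rw [hpart M]
  · -- tail bound
    intro M hM
    rw [hpart M]
    have hMR : (1 : ℝ) ≤ M := by exact_mod_cast hM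
    have hM0 : (0 : ℝ) < M := by linarith
    have htaileq : -(∑' k, g k) - -(∑ k ∈ Finset.range (M + 1), g k)
        = -(∑' i, g (i + (M + 1))) := by
      rw [← Summable.sum_add_tsum_nat_add (M + 1) hsum]
      ring
    rw [htaileq, norm_neg]
    have hsumnorm' : Summable fun i => ‖g (i + (M + 1))‖ :=
      (summable_nat_add_iff (M + 1)).mpr hsumnorm
    set A : ℝ := ((C' + 2) * F.natDegree) * ((q : ℝ) ^ (-(M : ℝ) / 2) / M) with hA_def
    have hA0 : 0 ≤ A := by
      have : (0 : ℝ) ≤ (q : ℝ) ^ (-(M : ℝ) / 2) / M := by positivity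
      exact mul_nonneg hCd0 this
    have hgeo' : Summable (fun i : ℕ => A * r ^ (i + 1)) := by
      have h := (summable_geometric_of_lt_one hr0.le hr1).mul_left (A * r)
      refine h.congr fun i => ?_
      ring
    have hterm : ∀ i : ℕ, ‖g (i + (M + 1))‖ ≤ A * r ^ (i + 1) := by
      intro i
      refine (hg1 (i + (M + 1)) (by omega)).trans ?_
      have hkey : (q : ℝ) ^ (-((i + (M + 1) : ℕ) : ℝ) / 2)
          = (q : ℝ) ^ (-(M : ℝ) / 2) * r ^ (i + 1) := by
        rw [hrk (i + 1), ← Real.rpow_add hq0]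
        congr 1
        push_cast
        ring
      have hN0 : (0 : ℝ) < ((i + (M + 1) : ℕ) : ℝ) := by positivity
      have hfrac : (q : ℝ) ^ (-((i + (M + 1) : ℕ) : ℝ) / 2) / ((i + (M + 1) : ℕ) : ℝ)
          ≤ ((q : ℝ) ^ (-(M : ℝ) / 2) / M) * r ^ (i + 1) := by
        rw [hkey]
        have hnum0 : (0 : ℝ) ≤ (q : ℝ) ^ (-(M : ℝ) / 2) * r ^ (i + 1) := by
          positivity
        have hMN : (M : ℝ) ≤ ((i + (M + 1) : ℕ) : ℝ) := by
          push_cast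
          linarith [Nat.cast_nonneg (α := ℝ) i]
        calc (q : ℝ) ^ (-(M : ℝ) / 2) * r ^ (i + 1) / ((i + (M + 1) : ℕ) : ℝ)
            ≤ (q : ℝ) ^ (-(M : ℝ) / 2) * r ^ (i + 1) / M := by
              gcongr
          _ = ((q : ℝ) ^ (-(M : ℝ) / 2) / M) * r ^ (i + 1) := by ring
      calc (C' + 2) * ((q : ℝ) ^ (-((i + (M + 1) : ℕ) : ℝ) / 2) / ((i + (M + 1) : ℕ) : ℝ))
            * F.natDegree
          = ((C' + 2) * F.natDegree)
            * ((q : ℝ) ^ (-((i + (M + 1) : ℕ) : ℝ) / 2) / ((i + (M + 1) : ℕ) : ℝ)) := by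
            ring
        _ ≤ ((C' + 2) * F.natDegree) * (((q : ℝ) ^ (-(M : ℝ) / 2) / M) * r ^ (i + 1)) :=
            mul_le_mul_of_nonneg_left hfrac hCd0
        _ = A * r ^ (i + 1) := by rw [hA_def]; ring
    have hinv4 : (1 - r)⁻¹ ≤ 4 := by
      rw [inv_le_comm₀ (by linarith) (by norm_num)]
      linarith
    calc ‖∑' i, g (i + (M + 1))‖ ≤ ∑' i, ‖g (i + (M + 1))‖ :=
          norm_tsum_le_tsum_norm hsumnorm'
      _ ≤ ∑' i, A * r ^ (i + 1) := Summable.tsum_le_tsum hterm hsumnorm' hgeo'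
      _ = (A * r) * (1 - r)⁻¹ := by
          rw [tsum_congr (fun i => show A * r ^ (i + 1) = (A * r) * r ^ i by ring),
            tsum_mul_left, tsum_geometric_of_lt_one hr0.le hr1]
      _ ≤ A * 4 := by
          have hri : r * (1 - r)⁻¹ ≤ 4 := by
            have hi0 : (0 : ℝ) ≤ (1 - r)⁻¹ := inv_nonneg.mpr (by linarith)
            calc r * (1 - r)⁻¹ ≤ 1 * (1 - r)⁻¹ :=
                  mul_le_mul_of_nonneg_right (by linarith) hi0
              _ ≤ 4 := by rw [one_mul]; exact hinv4
          calc (A * r) * (1 - r)⁻¹ = A * (r * (1 - r)⁻¹) := by ring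
            _ ≤ A * 4 := mul_le_mul_of_nonneg_left hri hA0
      _ = 4 * (C' + 2) * ((q : ℝ) ^ (-(M : ℝ) / 2) / M) * F.natDegree := by
          rw [hA_def]
          ring
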